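/- Let n ≥ 1, and let μ_1,…,μ_{n+1} satisfy 2μ_1 ∈ ℕ and μ_{i+1}-μ_i ∈ ℕ, with 2μ_{n+1} even. Then ∑_{s=0}^n (-1)^{n-s}·C(n+s+μ_{s+1}, 2n)·(2s+2μ_{s+1}+1)/(2n+1)·d_{2n+1}(∑_{i=1}^s μ_iε_i + ∑_{i=s+1}^n (μ_{i+1}+1)ε_i) = d_{2n+3}(∑_{i=1}^{n+1} μ_iε_i), where d_{2m+1}(ν) is given by Weyl's dimension formula for type B_m. -/

import Mathlib

/-- Binomial coefficient `C(x, m)` with the convention that it vanishes when `x < m`,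
and otherwise equals the generalized binomial coefficient `x(x-1)⋯(x-m+1)/m!`. -/
noncomputable def cchoose (x : ℚ) (m : ℕ) : ℚ :=
  if x < m then 0 else (∏ i ∈ Finset.range m, (x - i)) / (Nat.factorial m)

/-- Weyl dimension product for the root system `B_n` with positive roots
`{ε_i, ε_j ± ε_i}` and `ρ = (1/2)∑(2i-1)ε_i`, evaluated at the weight `∑ ν_i ε_i`:
`∏_{α∈Φ⁺}(ν+ρ,α)/(ρ,α)`. -/
noncomputable def dimB (n : ℕ) (ν : ℕ → ℚ) : ℚ :=
  (∏ p ∈ (Finset.Icc 1 n ×ˢ Finset.Icc 1 n).filter (fun p => p.1 < p.2),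
      (((ν p.2 + (p.2 : ℚ) - 1/2) - (ν p.1 + (p.1 : ℚ) - 1/2)) *
        ((ν p.2 + (p.2 : ℚ) - 1/2) + (ν p.1 + (p.1 : ℚ) - 1/2))) /
      ((((p.2 : ℚ) - 1/2) - ((p.1 : ℚ) - 1/2)) *
        (((p.2 : ℚ) - 1/2) + ((p.1 : ℚ) - 1/2)))) *
  ∏ i ∈ Finset.Icc 1 n, (ν i + (i : ℚ) - 1/2) / ((i : ℚ) - 1/2)

/-- Weyl dimension product for the root system `D_n` with positive roots
`{ε_j ± ε_i : i < j}` and `ρ = ∑(i-1)ε_i`, evaluated at the weight `∑ ν_i ε_i`. -/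
noncomputable def dimD (n : ℕ) (ν : ℕ → ℚ) : ℚ :=
  ∏ p ∈ (Finset.Icc 1 n ×ˢ Finset.Icc 1 n).filter (fun p => p.1 < p.2),
      (((ν p.2 + (p.2 : ℚ) - 1) - (ν p.1 + (p.1 : ℚ) - 1)) *
        ((ν p.2 + (p.2 : ℚ) - 1) + (ν p.1 + (p.1 : ℚ) - 1))) /
      ((((p.2 : ℚ)) - (p.1 : ℚ)) * (((p.2 : ℚ) - 1) + ((p.1 : ℚ) - 1)))

open Finset Polynomial

section Helpers

lemma finprod_to_range (m : ℕ) (f : ℕ → ℕ → ℚ) :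
    ∏ i : Fin m, ∏ j ∈ Finset.Ioi i, f (i:ℕ) (j:ℕ) =
      ∏ j ∈ Finset.range m, ∏ i ∈ Finset.range j, f i j := by
  rw [Finset.prod_sigma', Finset.prod_sigma']
  refine Finset.prod_nbij (fun x => ⟨(x.2 : ℕ), (x.1 : ℕ)⟩) ?_ ?_ ?_ ?_
  · rintro ⟨i, j⟩ h
    simp only [Finset.mem_sigma, Finset.mem_univ, Finset.mem_Ioi, Finset.mem_range] at h ⊢
    exact ⟨j.isLt, h.2⟩
  · rintro ⟨i, j⟩ - ⟨i', j'⟩ - h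
    obtain ⟨h1, h2⟩ := Sigma.ext_iff.mp h
    simp only at h1 h2
    have h2' := eq_of_heq h2
    refine Sigma.ext ?_ ?_ <;> simp_all [Fin.ext_iff]
  · rintro ⟨j, i⟩ h
    simp only [Finset.coe_sigma, Set.mem_sigma_iff, Finset.mem_coe, Finset.mem_range] at h
    obtain ⟨hj, hi⟩ := h
    refine ⟨⟨⟨i, lt_trans hi hj⟩, ⟨j, hj⟩⟩, ?_, rfl⟩
    simp [Finset.mem_sigma, Finset.mem_Ioi, Fin.lt_def, hi]
  · rintro ⟨i, j⟩ -
    rfl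

lemma iccpairs_to_range (m : ℕ) (f : ℕ → ℕ → ℚ) :
    ∏ p ∈ (Finset.Icc 1 m ×ˢ Finset.Icc 1 m).filter (fun p => p.1 < p.2), f p.1 p.2 =
      ∏ j ∈ Finset.range m, ∏ i ∈ Finset.range j, f (i+1) (j+1) := by
  rw [Finset.prod_sigma']
  refine (Finset.prod_nbij (fun x => (x.2 + 1, x.1 + 1)) ?_ ?_ ?_ ?_).symm
  · rintro ⟨j, i⟩ h
    simp only [Finset.mem_sigma, Finset.mem_range] at h
    simp only [Finset.mem_filter, Finset.mem_product, Finset.mem_Icc]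
    omega
  · rintro ⟨i, j⟩ - ⟨i', j'⟩ - h
    simp only [Prod.mk.injEq] at h
    refine Sigma.ext ?_ ?_ <;> simp only [heq_eq_eq] <;> omega
  · rintro ⟨i, j⟩ h
    simp only [Finset.coe_filter, Finset.mem_product, Finset.mem_Icc, Set.mem_setOf_eq] at h
    refine ⟨⟨j - 1, i - 1⟩, ?_, ?_⟩
    · simp only [Finset.mem_coe, Finset.mem_sigma, Finset.mem_range]; omega
    · simp only [Prod.mk.injEq]; constructor <;> omega
  · rintro ⟨j, i⟩ -
    rfl

lemma icc_to_range (m : ℕ) (f : ℕ → ℚ) :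
    ∏ i ∈ Finset.Icc 1 m, f i = ∏ t ∈ Finset.range m, f (t + 1) := by
  rw [← Finset.Ico_add_one_right_eq_Icc, Finset.prod_Ico_eq_prod_range]
  simp [Nat.add_comm]

lemma succAbove_val (m : ℕ) (s : Fin (m+1)) (j : Fin m) :
    ((s.succAbove j : Fin (m+1)) : ℕ) = if (j:ℕ) < (s:ℕ) then (j:ℕ) else (j:ℕ)+1 := by
  rw [Fin.succAbove]
  split_ifs with h h1 h2 <;> simp_all [Fin.lt_def]

lemma key_det (m : ℕ) (u a : ℕ → ℚ) :
    ∑ s ∈ Finset.range (m+1), (-1:ℚ)^(m-s) * (∏ k ∈ Finset.range m, (u s - a k)) *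
      (∏ j ∈ Finset.range m, ∏ i ∈ Finset.range j,
        (u (if j < s then j else j+1) - u (if i < s then i else i+1)))
    = ∏ j ∈ Finset.range (m+1), ∏ i ∈ Finset.range j, (u j - u i) := by
  set p : Fin (m+1) → ℚ[X] := fun j => ∏ k ∈ Finset.range (j:ℕ), (X - C (a k)) with hp
  have hmonic : ∀ j, (p j).Monic := fun j =>
    Polynomial.monic_prod_of_monic _ _ (fun k _ => monic_X_sub_C (a k))
  have hdeg : ∀ j, (p j).natDegree = (j : ℕ) := by
    intro j
    rw [hp]
    rw [Polynomial.natDegree_prod_of_monic _ _ (fun k _ => monic_X_sub_C (a k))]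
    simp [Polynomial.natDegree_X_sub_C]
  set v : Fin (m+1) → ℚ := fun i => u i with hv
  have hdet := Matrix.det_eval_matrixOfPolynomials_eq_det_vandermonde v p hdeg hmonic
  have h1 : (Matrix.of fun i j => eval (v i) (p j)).det
      = ∏ j ∈ Finset.range (m+1), ∏ i ∈ Finset.range j, (u j - u i) := by
    rw [← hdet, Matrix.det_vandermonde]
    exact finprod_to_range (m+1) (fun i j => u j - u i)
  have h2 : ∀ s : Fin (m+1),
      ((Matrix.of fun i j => eval (v i) (p j)).submatrix s.succAbove (Fin.last m).succAbove).det
      = ∏ j ∈ Finset.range m, ∏ i ∈ Finset.range j,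
          (u (if j < (s:ℕ) then j else j+1) - u (if i < (s:ℕ) then i else i+1)) := by
    intro s
    rw [Fin.succAbove_last]
    set q : Fin m → ℚ[X] := fun j => ∏ k ∈ Finset.range (j:ℕ), (X - C (a k)) with hq
    have hqm : ∀ j, (q j).Monic := fun j =>
      Polynomial.monic_prod_of_monic _ _ (fun k _ => monic_X_sub_C (a k))
    have hqd : ∀ j, (q j).natDegree = (j : ℕ) := by
      intro j
      rw [hq, Polynomial.natDegree_prod_of_monic _ _ (fun k _ => monic_X_sub_C (a k))]
      simp [Polynomial.natDegree_X_sub_C]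
    have hsub : (Matrix.of fun i j => eval (v i) (p j)).submatrix s.succAbove Fin.castSucc
        = Matrix.of (fun i j => eval ((fun i' : Fin m => u ((s.succAbove i' : Fin (m+1)) : ℕ)) i) (q j)) := by
      ext i j
      simp only [Matrix.submatrix_apply, Matrix.of_apply, hp, hq, hv, Fin.coe_castSucc]
    rw [hsub, ← Matrix.det_eval_matrixOfPolynomials_eq_det_vandermonde _ q hqd hqm,
      Matrix.det_vandermonde]
    rw [← finprod_to_range m (fun i j =>
      u (if j < (s:ℕ) then j else j+1) - u (if i < (s:ℕ) then i else i+1))]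
    refine Finset.prod_congr rfl fun i _ => Finset.prod_congr rfl fun j _ => ?_
    simp only [hv, succAbove_val]
  rw [← h1, Matrix.det_succ_column _ (Fin.last m)]
  rw [← Fin.sum_univ_eq_sum_range (fun w => (-1:ℚ)^(m-w) * (∏ k ∈ Finset.range m, (u w - a k)) *
      (∏ j ∈ Finset.range m, ∏ i ∈ Finset.range j,
        (u (if j < w then j else j+1) - u (if i < w then i else i+1)))) (m+1)]
  refine Finset.sum_congr rfl fun s _ => ?_
  rw [h2 s]
  have hsign : ((-1:ℚ))^(m - (s:ℕ)) = (-1)^((s:ℕ) + (Fin.last m : ℕ)) := by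
    rw [Fin.val_last]
    have : (s:ℕ) + m = (m - (s:ℕ)) + 2 * (s:ℕ) := by omega
    rw [this, pow_add, pow_mul]
    simp
  have heval : (Matrix.of fun i j => eval (v i) (p j)) s (Fin.last m)
      = ∏ k ∈ Finset.range m, (u s - a k) := by
    simp [hp, hv, Polynomial.eval_prod]
  rw [heval, hsign]

lemma cchoose_nat (b mm : ℕ) :
    cchoose (b : ℚ) mm = (∏ i ∈ Finset.range mm, ((b:ℚ) - i)) / (Nat.factorial mm) := by
  unfold cchoose
  split_ifs with h
  · have hb : b < mm := by exact_mod_cast h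
    rw [Finset.prod_eq_zero (Finset.mem_range.mpr hb) (by simp), zero_div]
  · rfl

lemma binom_prod (X : ℚ) (n : ℕ) :
    ∏ i ∈ Finset.range (2*n), (X + (n:ℚ) - 1/2 - i) =
      ∏ k ∈ Finset.range n, (X^2 - ((k:ℚ)+1/2)^2) := by
  rw [two_mul, Finset.prod_range_add]
  have hA : ∏ i ∈ Finset.range n, (X + (n:ℚ) - 1/2 - i)
      = ∏ i ∈ Finset.range n, (X + (i:ℚ) + 1/2) := by
    rw [← Finset.prod_range_reflect (fun i => X + (i:ℚ) + 1/2) n]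
    refine Finset.prod_congr rfl fun i hi => ?_
    have hi' := Finset.mem_range.mp hi
    rw [Nat.cast_sub (by omega), Nat.cast_sub (by omega)]
    push_cast
    ring
  have hB : ∏ i ∈ Finset.range n, (X + (n:ℚ) - 1/2 - (n + i : ℕ))
      = ∏ i ∈ Finset.range n, (X - (i:ℚ) - 1/2) := by
    refine Finset.prod_congr rfl fun i hi => ?_
    push_cast
    ring
  rw [hA, hB, ← Finset.prod_mul_distrib]
  refine Finset.prod_congr rfl fun i hi => by ring

lemma fact_prod (n : ℕ) :
    ∏ i ∈ Finset.range n, (((n:ℚ) - i) * ((n:ℚ) + 1 + i)) = Nat.factorial (2*n) := by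
  have hA : ∏ i ∈ Finset.range n, (n - i) = Nat.factorial n := by
    rw [← Finset.prod_range_add_one_eq_factorial, ← Finset.prod_range_reflect (fun i => i + 1) n]
    refine Finset.prod_congr rfl fun i hi => ?_
    have := Finset.mem_range.mp hi
    omega
  have hB : Nat.factorial n * ∏ i ∈ Finset.range n, (n + 1 + i) = Nat.factorial (2*n) := by
    rw [← Finset.prod_range_add_one_eq_factorial, ← Finset.prod_range_add_one_eq_factorial,
      two_mul, Finset.prod_range_add]
    congr 1
    exact Finset.prod_congr rfl fun i _ => by omega
  have hcast : ∀ i ∈ Finset.range n, ((n:ℚ) - i) * ((n:ℚ) + 1 + i)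
      = (((n - i) * (n + 1 + i) : ℕ) : ℚ) := by
    intro i hi
    have := Finset.mem_range.mp hi
    push_cast [Nat.cast_sub (by omega : i ≤ n)]
    ring
  rw [Finset.prod_congr rfl hcast, ← Nat.cast_prod, Finset.prod_mul_distrib, hA, hB]

lemma split_prod (n s : ℕ) (hs : s ≤ n) (u : ℕ → ℚ) :
    u s * ∏ t ∈ Finset.range n, u (if t < s then t else t+1)
      = ∏ t ∈ Finset.range (n+1), u t := by
  obtain ⟨d, rfl⟩ : ∃ d, n = s + d := ⟨n - s, by omega⟩
  rw [Finset.prod_range_add]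
  have h1 : ∏ t ∈ Finset.range s, u (if t < s then t else t+1) = ∏ t ∈ Finset.range s, u t :=
    Finset.prod_congr rfl fun t ht => by
      rw [if_pos (Finset.mem_range.mp ht)]
  have h2 : ∏ t ∈ Finset.range d, u (if s + t < s then s + t else s + t + 1)
      = ∏ t ∈ Finset.range d, u (s + (t + 1)) :=
    Finset.prod_congr rfl fun t ht => by
      rw [if_neg (by omega)]
      congr 1 <;> omega
  rw [h1, h2]
  have h3 : s + d + 1 = s + (d + 1) := by omega
  rw [h3, Finset.prod_range_add, Finset.prod_range_succ' (fun t => u (s + t)) d]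
  have h4 : u (s + 0) = u s := by norm_num
  rw [h4]
  ring

lemma dimB_eq (m : ℕ) (ν : ℕ → ℚ) :
    dimB m ν =
      ((∏ j ∈ Finset.range m, ∏ i ∈ Finset.range j,
          ((ν (j+1) + (j:ℚ) + 1/2)^2 - (ν (i+1) + (i:ℚ) + 1/2)^2)) *
        ∏ t ∈ Finset.range m, (ν (t+1) + (t:ℚ) + 1/2)) /
      ((∏ j ∈ Finset.range m, ∏ i ∈ Finset.range j,
          (((j:ℚ) + 1/2)^2 - ((i:ℚ) + 1/2)^2)) *
        ∏ t ∈ Finset.range m, ((t:ℚ) + 1/2)) := by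
  unfold dimB
  rw [Finset.prod_div_distrib, Finset.prod_div_distrib, div_mul_div_comm]
  congr 1
  · congr 1
    · rw [iccpairs_to_range m (fun a b =>
        ((ν b + (b : ℚ) - 1/2) - (ν a + (a : ℚ) - 1/2)) *
        ((ν b + (b : ℚ) - 1/2) + (ν a + (a : ℚ) - 1/2)))]
      refine Finset.prod_congr rfl fun j _ => Finset.prod_congr rfl fun i _ => ?_
      push_cast
      ring
    · rw [icc_to_range m (fun i => ν i + (i : ℚ) - 1/2)]
      refine Finset.prod_congr rfl fun t _ => ?_
      push_cast
      ring
  · congr 1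
    · rw [iccpairs_to_range m (fun a b =>
        (((b : ℚ) - 1/2) - ((a : ℚ) - 1/2)) * (((b : ℚ) - 1/2) + ((a : ℚ) - 1/2)))]
      refine Finset.prod_congr rfl fun j _ => Finset.prod_congr rfl fun i _ => ?_
      push_cast
      ring
    · rw [icc_to_range m (fun i => (i : ℚ) - 1/2)]
      refine Finset.prod_congr rfl fun t _ => ?_
      push_cast
      ring

end Helpers

theorem macdonald_analogue_B_even (n : ℕ) (hn : 1 ≤ n) (μ : ℕ → ℚ)
    (h1 : ∃ a : ℕ, 2 * μ 1 = a)
    (hdom : ∀ i : ℕ, 1 ≤ i → i ≤ n → ∃ m : ℕ, μ (i + 1) - μ i = m)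
    (heven : ∃ m : ℕ, 2 * μ (n + 1) = 2 * m) :
    ∑ s ∈ Finset.range (n + 1), (-1 : ℚ) ^ (n - s) *
        cchoose ((n : ℚ) + (s : ℚ) + μ (s + 1)) (2 * n) *
        ((2 * (s : ℚ) + 2 * μ (s + 1) + 1) / (2 * (n : ℚ) + 1)) *
        dimB n (fun i => if i ≤ s then μ i else μ (i + 1) + 1) =
      dimB (n + 1) μ := by
  classical
  obtain ⟨a, ha⟩ := h1
  obtain ⟨mt, hmt⟩ := heven
  have hmt' : μ (n+1) = (mt : ℚ) := by linarith
  have hμ1 : (0:ℚ) ≤ μ 1 := by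
    have : (0:ℚ) ≤ (a:ℚ) := Nat.cast_nonneg a
    linarith
  have hstep : ∀ i, 1 ≤ i → ∀ j, i ≤ j → j ≤ n+1 → ∃ d : ℕ, μ j - μ i = d := by
    intro i hi j hij
    induction j, hij using Nat.le_induction with
    | base => intro _; exact ⟨0, by simp⟩
    | succ j hij ih =>
      intro hj
      obtain ⟨d, hd⟩ := ih (by omega)
      obtain ⟨e, he⟩ := hdom j (by omega) (by omega)
      refine ⟨e + d, by push_cast; linarith⟩
  have hμnat : ∀ i, 1 ≤ i → i ≤ n+1 → ∃ b : ℕ, μ i = b := by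
    intro i hi hi'
    obtain ⟨d, hd⟩ := hstep i hi (n+1) hi' (le_refl _)
    obtain ⟨d1, hd1⟩ := hstep 1 le_rfl i hi hi'
    have h0 : (0:ℚ) ≤ μ i := by
      have : (0:ℚ) ≤ (d1:ℚ) := Nat.cast_nonneg d1
      linarith
    have hdm : d ≤ mt := by
      by_contra hcon
      have : (mt:ℚ) < (d:ℚ) := by exact_mod_cast Nat.lt_of_not_le hcon
      have : μ i < 0 := by linarith
      linarith
    exact ⟨mt - d, by rw [Nat.cast_sub hdm]; linarith⟩
  set u : ℕ → ℚ := fun t => μ (t+1) + (t:ℚ) + 1/2 with hu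
  set DP : ℚ := ∏ j ∈ Finset.range n, ∏ i ∈ Finset.range j,
      (((j:ℚ) + 1/2)^2 - ((i:ℚ) + 1/2)^2) with hDP
  set DS : ℚ := ∏ t ∈ Finset.range n, ((t:ℚ) + 1/2) with hDS
  have hDPpos : 0 < DP := by
    rw [hDP]
    refine Finset.prod_pos fun j hj => Finset.prod_pos fun i hi => ?_
    have h1 : (i:ℚ) < (j:ℚ) := by exact_mod_cast Finset.mem_range.mp hi
    have h2 : (0:ℚ) ≤ (i:ℚ) := Nat.cast_nonneg i
    nlinarith
  have hDSpos : 0 < DS := by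
    rw [hDS]
    refine Finset.prod_pos fun t _ => by positivity
  have hfac : ((Nat.factorial (2*n) : ℕ) : ℚ) ≠ 0 := by
    exact_mod_cast Nat.factorial_ne_zero (2*n)
  have h2n1 : (2*(n:ℚ)+1) ≠ 0 := by positivity
  have hterm : ∀ s ∈ Finset.range (n+1),
      (-1 : ℚ) ^ (n - s) * cchoose ((n : ℚ) + (s : ℚ) + μ (s + 1)) (2 * n) *
        ((2 * (s : ℚ) + 2 * μ (s + 1) + 1) / (2 * (n : ℚ) + 1)) *
        dimB n (fun i => if i ≤ s then μ i else μ (i + 1) + 1)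
      = ((-1:ℚ)^(n-s) * (∏ k ∈ Finset.range n, (u s^2 - ((k:ℚ)+1/2)^2)) *
          (∏ j ∈ Finset.range n, ∏ i ∈ Finset.range j,
            (u (if j < s then j else j+1)^2 - u (if i < s then i else i+1)^2)))
        * ((∏ t ∈ Finset.range (n+1), u t) *
            (2 / (((Nat.factorial (2*n) : ℕ) : ℚ) * (2*(n:ℚ)+1) * (DP * DS)))) := by
    intro s hs
    have hsn : s ≤ n := by
      have := Finset.mem_range.mp hs
      omega
    obtain ⟨b, hb⟩ := hμnat (s+1) (by omega) (by omega)
    have harg : (n : ℚ) + (s : ℚ) + μ (s + 1) = ((n + s + b : ℕ) : ℚ) := by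
      rw [hb]; push_cast; ring
    have hch : cchoose ((n : ℚ) + (s : ℚ) + μ (s + 1)) (2 * n)
        = (∏ k ∈ Finset.range n, (u s^2 - ((k:ℚ)+1/2)^2)) / ((Nat.factorial (2*n) : ℕ) : ℚ) := by
      rw [harg, cchoose_nat, ← binom_prod (u s) n]
      congr 1
      refine Finset.prod_congr rfl fun i _ => ?_
      simp only [hu]
      rw [hb]
      push_cast
      ring
    have h2u : 2 * (s : ℚ) + 2 * μ (s + 1) + 1 = 2 * u s := by
      simp only [hu]
      push_cast
      ring
    rw [dimB_eq]
    have hν : ∀ t : ℕ, ((fun i => if i ≤ s then μ i else μ (i + 1) + 1) (t+1) + (t:ℚ) + 1/2)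
        = u (if t < s then t else t + 1) := by
      intro t
      by_cases h : t < s
      · simp only [hu]
        rw [if_pos h, if_pos (by omega : t + 1 ≤ s)]
      · simp only [hu]
        rw [if_neg h, if_neg (by omega : ¬ (t + 1 ≤ s))]
        push_cast
        ring
    have hV : ∏ j ∈ Finset.range n, ∏ i ∈ Finset.range j,
        (((fun i => if i ≤ s then μ i else μ (i + 1) + 1) (j+1) + (j:ℚ) + 1/2)^2 -
         ((fun i => if i ≤ s then μ i else μ (i + 1) + 1) (i+1) + (i:ℚ) + 1/2)^2)
        = ∏ j ∈ Finset.range n, ∏ i ∈ Finset.range j,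
            (u (if j < s then j else j+1)^2 - u (if i < s then i else i+1)^2) := by
      refine Finset.prod_congr rfl fun j _ => Finset.prod_congr rfl fun i _ => ?_
      rw [hν j, hν i]
    have hP : ∏ t ∈ Finset.range n,
        ((fun i => if i ≤ s then μ i else μ (i + 1) + 1) (t+1) + (t:ℚ) + 1/2)
        = ∏ t ∈ Finset.range n, u (if t < s then t else t + 1) := by
      refine Finset.prod_congr rfl fun t _ => ?_
      rw [hν t]
    rw [hV, hP, hch, h2u, ← hDP, ← hDS]
    rw [← split_prod n s hsn u]
    have hDPne : DP ≠ 0 := ne_of_gt hDPpos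
    have hDSne : DS ≠ 0 := ne_of_gt hDSpos
    field_simp
    ring
  rw [Finset.sum_congr rfl hterm, ← Finset.sum_mul]
  have hk : ∑ s ∈ Finset.range (n+1), (-1:ℚ)^(n-s) *
      (∏ k ∈ Finset.range n, (u s^2 - ((k:ℚ)+1/2)^2)) *
      (∏ j ∈ Finset.range n, ∏ i ∈ Finset.range j,
        (u (if j < s then j else j+1)^2 - u (if i < s then i else i+1)^2))
      = ∏ j ∈ Finset.range (n+1), ∏ i ∈ Finset.range j, (u j^2 - u i^2) :=
    key_det n (fun t => u t^2) (fun k => ((k:ℚ)+1/2)^2)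
  rw [hk]
  rw [dimB_eq (n+1) μ]
  have hRV : ∏ j ∈ Finset.range (n+1), ∏ i ∈ Finset.range j,
      ((μ (j+1) + (j:ℚ) + 1/2)^2 - (μ (i+1) + (i:ℚ) + 1/2)^2)
      = ∏ j ∈ Finset.range (n+1), ∏ i ∈ Finset.range j, (u j^2 - u i^2) := rfl
  have hRP : ∏ t ∈ Finset.range (n+1), (μ (t+1) + (t:ℚ) + 1/2)
      = ∏ t ∈ Finset.range (n+1), u t := rfl
  rw [hRV, hRP]
  have hDP1 : ∏ j ∈ Finset.range (n+1), ∏ i ∈ Finset.range j,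
      (((j:ℚ) + 1/2)^2 - ((i:ℚ) + 1/2)^2) = DP * ((Nat.factorial (2*n) : ℕ) : ℚ) := by
    rw [Finset.prod_range_succ, hDP]
    congr 1
    rw [← fact_prod n]
    refine Finset.prod_congr rfl fun i hi => ?_
    push_cast
    ring
  have hDS1 : ∏ t ∈ Finset.range (n+1), ((t:ℚ) + 1/2) = DS * ((n:ℚ) + 1/2) := by
    rw [Finset.prod_range_succ, hDS]
  rw [hDP1, hDS1]
  have hDPne : DP ≠ 0 := ne_of_gt hDPpos
  have hDSne : DS ≠ 0 := ne_of_gt hDSpos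
  have hn12 : ((n:ℚ) + 1/2) ≠ 0 := by positivity
  field_simp
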